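/- Let X₁,…,Xₙ (n ≥ 2) be i.i.d. real random variables with variance σ² > 0, finite fourth central moment m₄, and kurtosis κ = m₄/σ⁴, and let S² be the unbiased sample variance (the square of the batch standard deviation σ_s = √S²). Then for every ε with 0 < ε < 1: Pr( 1/√(1+ε) ≤ σ/σ_s ≤ 1/√(1−ε) ) ≥ 1 − (1/ε²)·(κ/n − (n−3)/(n·(n−1))). -/

import Mathlib

open MeasureTheory ProbabilityTheory
open scoped ENNReal NNReal

set_option maxHeartbeats 1000000 in
/-- **Stability of batch normalization.** For i.i.d. `X₁,…,Xₙ` (`n ≥ 2`) with variance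
`σ² > 0`, finite fourth central moment `m₄` and kurtosis `κ = m₄/σ⁴`, letting
`σ_s = √S²` be the batch standard deviation, for every `0 < ε < 1`,
`Pr(1/√(1+ε) ≤ σ/σ_s ≤ 1/√(1−ε)) ≥ 1 − (1/ε²)(κ/n − (n−3)/(n(n−1)))`. -/
theorem batchnorm_ratio_concentration
    {Ω : Type*} [MeasurableSpace Ω] (μ : Measure Ω) [IsProbabilityMeasure μ]
    (n : ℕ) (hn : 2 ≤ n) (X : Fin n → Ω → ℝ)
    (hmeas : ∀ i, Measurable (X i))
    (hindep : iIndepFun X μ)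
    (ν : Measure ℝ) [IsProbabilityMeasure ν]
    (hident : ∀ i, μ.map (X i) = ν)
    (hL4 : MemLp id 4 ν)
    (m σ2 m4 κ : ℝ)
    (hm : m = ∫ x, x ∂ν)
    (hσ2 : σ2 = ∫ x, (x - m) ^ 2 ∂ν) (hσ2pos : 0 < σ2)
    (hm4 : m4 = ∫ x, (x - m) ^ 4 ∂ν)
    (hκ : κ = m4 / σ2 ^ 2)
    (Xbar S2 σs : Ω → ℝ)
    (hXbar : ∀ ω, Xbar ω = (∑ i, X i ω) / n)
    (hS2 : ∀ ω, S2 ω = (∑ i, (X i ω - Xbar ω) ^ 2) / ((n : ℝ) - 1))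
    (hσs : ∀ ω, σs ω = Real.sqrt (S2 ω))
    (ε : ℝ) (hε0 : 0 < ε) (hε1 : ε < 1) :
    ENNReal.ofReal
        (1 - (1 / ε ^ 2) * (κ / n - ((n : ℝ) - 3) / ((n : ℝ) * ((n : ℝ) - 1))))
      ≤ μ {ω | 1 / Real.sqrt (1 + ε) ≤ Real.sqrt σ2 / σs ω
            ∧ Real.sqrt σ2 / σs ω ≤ 1 / Real.sqrt (1 - ε)} := by
  classical
  have hn1R : (1:ℝ) < (n:ℝ) := by exact_mod_cast hn.trans_lt' (by norm_num)
  have hn0R : (0:ℝ) < (n:ℝ) := by linarith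
  have hnm1 : (0:ℝ) < (n:ℝ) - 1 := by linarith
  -- centered variables
  set Y : Fin n → Ω → ℝ := fun i ω => X i ω - m with hYdef
  have hYmeas : ∀ i, Measurable (Y i) := fun i => (hmeas i).sub measurable_const
  have hYindep : iIndepFun Y μ :=
    hindep.comp (fun _ x => x - m) (fun _ => measurable_id.sub measurable_const)
  have hYmap : ∀ i, μ.map (Y i) = ν.map (fun x => x - m) := by
    intro i
    calc μ.map (Y i) = (μ.map (X i)).map (fun x => x - m) :=
          (Measure.map_map (measurable_id.sub measurable_const) (hmeas i)).symm
      _ = ν.map (fun x => x - m) := by rw [hident i]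
  -- central moments of ν
  set c : ℕ → ℝ := fun k => ∫ x, (x - m) ^ k ∂ν with hcdef
  have momY : ∀ (i : Fin n) (k : ℕ), ∫ ω, Y i ω ^ k ∂μ = c k := by
    intro i k
    have h1 : ∫ ω, Y i ω ^ k ∂μ = ∫ y, y ^ k ∂(μ.map (Y i)) := by
      rw [integral_map (hYmeas i).aemeasurable (by fun_prop)]
    rw [h1, hYmap i, integral_map (by fun_prop) (by fun_prop)]
  have intν : Integrable (fun x => x) ν := hL4.integrable (by norm_num)
  have hc1 : c 1 = 0 := by
    have : c 1 = ∫ x, (x - m) ∂ν := by simp [hcdef]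
    rw [this, integral_sub intν (integrable_const m), integral_const, hm]
    simp
  have hc2 : c 2 = σ2 := hσ2.symm
  have hc4 : c 4 = m4 := hm4.symm
  -- L⁴ membership
  have memY : ∀ i, MemLp (Y i) 4 μ := by
    intro i
    have hX4 : MemLp (X i) 4 μ := by
      have := (memLp_map_measure_iff aestronglyMeasurable_id (hmeas i).aemeasurable).mp
        (by rw [hident i]; exact hL4)
      simpa [Function.comp] using this
    exact hX4.sub (memLp_const m)
  -- integrability of powers of an L⁴ function
  have pow_int : ∀ (f : Ω → ℝ), MemLp f 4 μ → ∀ k : ℕ, k ≤ 4 →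
      Integrable (fun ω => f ω ^ k) μ := by
    intro f hf k hk
    have h4 : Integrable (fun ω => |f ω| ^ (4:ℕ)) μ := by
      have h := hf.integrable_norm_rpow (by norm_num) (by norm_num)
      refine h.congr (Filter.Eventually.of_forall fun x => ?_)
      show ‖f x‖ ^ (ENNReal.toReal 4) = |f x| ^ (4:ℕ)
      rw [Real.norm_eq_abs, (by norm_num : (ENNReal.toReal 4) = ((4:ℕ):ℝ)),
        Real.rpow_natCast]
    refine Integrable.mono' ((integrable_const (1:ℝ)).add h4)
      (hf.aestronglyMeasurable.aemeasurable.pow_const k).aestronglyMeasurable ?_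
    filter_upwards with ω
    rw [Real.norm_eq_abs, abs_pow]
    show |f ω| ^ k ≤ 1 + |f ω| ^ (4:ℕ)
    rcases le_total (|f ω|) 1 with h | h
    · have : |f ω| ^ k ≤ 1 := pow_le_one₀ (abs_nonneg _) h
      have h2 : (0:ℝ) ≤ |f ω| ^ (4:ℕ) := by positivity
      linarith
    · have : |f ω| ^ k ≤ |f ω| ^ (4:ℕ) := pow_le_pow_right₀ h hk
      linarith
  have intYpow : ∀ (i : Fin n) (k : ℕ), k ≤ 4 → Integrable (fun ω => Y i ω ^ k) μ :=
    fun i => pow_int (Y i) (memY i)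
  have h11 : (1:ℝ≥0∞) = 2⁻¹ + 2⁻¹ := ENNReal.inv_two_add_inv_two.symm
  have h4inv : (4:ℝ≥0∞)⁻¹ = 2⁻¹ * 2⁻¹ := by
    rw [(by norm_num : (4:ℝ≥0∞) = 2 * 2), ENNReal.mul_inv (Or.inl (by norm_num)) (Or.inl (by norm_num))]
  have h24 : (2:ℝ≥0∞)⁻¹ = 4⁻¹ + 4⁻¹ := by
    rw [h4inv, ← mul_add, ← h11, mul_one]
  -- partial sums of Y and of Y²
  set S : Finset (Fin n) → Ω → ℝ := fun s ω => ∑ j ∈ s, Y j ω with hSdef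
  set Q : Finset (Fin n) → Ω → ℝ := fun s ω => ∑ j ∈ s, Y j ω ^ 2 with hQdef
  have hSmeas : ∀ s, Measurable (S s) := fun s => Finset.measurable_sum s (fun j _ => hYmeas j)
  have hQmeas : ∀ s, Measurable (Q s) :=
    fun s => Finset.measurable_sum s (fun j _ => (hYmeas j).pow_const 2)
  have hSapp : ∀ (s : Finset (Fin n)) ω, S s ω = ∑ j ∈ s, Y j ω := fun s ω => rfl
  have hQapp : ∀ (s : Finset (Fin n)) ω, Q s ω = ∑ j ∈ s, Y j ω ^ 2 := fun s ω => rfl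
  have memS : ∀ s, MemLp (S s) 4 μ := fun s => memLp_finsetSum s (fun j _ => memY j)
  have memY2 : ∀ i, MemLp (fun ω => Y i ω ^ 2) 2 μ := by
    intro i
    have h := (memY i).smul (memY i) (r := 2) (hpqr := ⟨by simpa [one_div] using h24.symm⟩)
    simpa [smul_eq_mul, pow_two, Pi.mul_def] using h
  have memQ : ∀ s, MemLp (Q s) 2 μ := fun s => memLp_finsetSum s (fun j _ => memY2 j)
  have memS2 : ∀ s, MemLp (fun ω => S s ω ^ 2) 2 μ := by
    intro s
    have h := (memS s).smul (memS s) (r := 2) (hpqr := ⟨by simpa [one_div] using h24.symm⟩)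
    simpa [smul_eq_mul, pow_two, Pi.mul_def] using h
  have intS : ∀ s (k : ℕ), k ≤ 4 → Integrable (fun ω => S s ω ^ k) μ :=
    fun s => pow_int _ (memS s)
  have intS1 : ∀ s, Integrable (S s) μ := fun s => by simpa using intS s 1 (by norm_num)
  have intQ1 : ∀ s, Integrable (Q s) μ := fun s => (memQ s).integrable one_le_two
  have intQ2 : ∀ s, Integrable (fun ω => Q s ω ^ 2) μ := by
    intro s
    have h := (memQ s).smul (memQ s) (r := 1) (hpqr := ⟨by simpa [one_div] using h11.symm⟩)
    exact memLp_one_iff_integrable.mp (by simpa [smul_eq_mul, pow_two, Pi.mul_def] using h)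
  have intQS : ∀ s, Integrable (fun ω => Q s ω * S s ω) μ := by
    intro s
    have h := ((memS s).mono_exponent (p := 2) (by norm_num)).smul (memQ s) (r := 1) (hpqr := ⟨by simpa [one_div] using h11.symm⟩)
    exact memLp_one_iff_integrable.mp (by simpa [smul_eq_mul, Pi.mul_def] using h)
  have intQS2 : ∀ s, Integrable (fun ω => Q s ω * S s ω ^ 2) μ := by
    intro s
    have h := (memS2 s).smul (memQ s) (r := 1) (hpqr := ⟨by simpa [one_div] using h11.symm⟩)
    exact memLp_one_iff_integrable.mp (by simpa [smul_eq_mul, Pi.mul_def] using h)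
  -- independence of functions of (Q s, S s) from powers of Y i, i ∉ s
  have indepQS : ∀ (s : Finset (Fin n)) (i : Fin n), i ∉ s → ∀ (F : ℝ → ℝ → ℝ),
      Measurable (Function.uncurry F) → ∀ k : ℕ,
      IndepFun (fun ω => F (Q s ω) (S s ω)) (fun ω => Y i ω ^ k) μ := by
    intro s i hi F hF k
    have hdisj : Disjoint s ({i} : Finset (Fin n)) := by
      simp [Finset.disjoint_singleton_right, hi]
    have hφ : Measurable (fun v : (j : {x // x ∈ s}) → ℝ => F (∑ j, v j ^ 2) (∑ j, v j)) := by
      exact hF.comp ((Finset.univ.measurable_sum fun j _ => (measurable_pi_apply j).pow_const 2).prodMk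
        (Finset.univ.measurable_sum fun j _ => measurable_pi_apply j))
    have hψ : Measurable (fun v : (j : {x // x ∈ ({i} : Finset (Fin n))}) → ℝ =>
        (v ⟨i, Finset.mem_singleton_self i⟩) ^ k) := (measurable_pi_apply _).pow_const k
    have h0 := (hYindep.indepFun_finset s {i} hdisj hYmeas).comp hφ hψ
    have e1 : ((fun v : (j : {x // x ∈ s}) → ℝ => F (∑ j, v j ^ 2) (∑ j, v j)) ∘
        (fun a (j : {x // x ∈ s}) => Y j a)) = fun ω => F (Q s ω) (S s ω) := by
      funext a
      simp only [Function.comp]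
      rw [Finset.sum_coe_sort s (fun j => Y j a ^ 2), Finset.sum_coe_sort s (fun j => Y j a)]
    have e2 : ((fun v : (j : {x // x ∈ ({i} : Finset (Fin n))}) → ℝ =>
        (v ⟨i, Finset.mem_singleton_self i⟩) ^ k) ∘
        (fun a (j : {x // x ∈ ({i} : Finset (Fin n))}) => Y j a)) = fun ω => Y i ω ^ k := rfl
    rw [e1, e2] at h0
    exact h0
  have int_mulYk : ∀ (s : Finset (Fin n)) (i : Fin n), i ∉ s → ∀ (F : ℝ → ℝ → ℝ),
      (hF : Measurable (Function.uncurry F)) → ∀ k : ℕ,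
      ∫ ω, F (Q s ω) (S s ω) * Y i ω ^ k ∂μ = (∫ ω, F (Q s ω) (S s ω) ∂μ) * c k := by
    intro s i hi F hF k
    have h := (indepQS s i hi F hF k).integral_mul_eq_mul_integral
      ((hF.comp ((hQmeas s).prodMk (hSmeas s))).aestronglyMeasurable)
      (((hYmeas i).pow_const k).aestronglyMeasurable)
    rw [← momY i k]
    exact h
  have int_mulYk_int : ∀ (s : Finset (Fin n)) (i : Fin n), i ∉ s → ∀ (F : ℝ → ℝ → ℝ),
      Measurable (Function.uncurry F) →
      Integrable (fun ω => F (Q s ω) (S s ω)) μ → ∀ k : ℕ, k ≤ 4 →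
      Integrable (fun ω => F (Q s ω) (S s ω) * Y i ω ^ k) μ :=
    fun s i hi F hF hInt k hk => (indepQS s i hi F hF k).integrable_mul hInt (intYpow i k hk)
  have I1 : ∀ s : Finset (Fin n), ∫ ω, S s ω ∂μ = 0 := by
    intro s
    induction s using Finset.induction_on with
    | empty => simp [hSdef]
    | @insert i s hi ih =>
      have hexp : ∀ ω, S (insert i s) ω = S s ω + Y i ω ^ 1 := by
        intro ω; simp only [hSdef, Finset.sum_insert hi, pow_one]; ring
      simp only [hexp]
      rw [integral_add (intS1 s) (intYpow i 1 (by norm_num)), ih, momY, hc1, add_zero]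
  have J1 : ∀ s : Finset (Fin n), ∫ ω, Q s ω ∂μ = s.card * σ2 := by
    intro s
    induction s using Finset.induction_on with
    | empty => simp [hQdef]
    | @insert i s hi ih =>
      have hexp : ∀ ω, Q (insert i s) ω = Q s ω + Y i ω ^ 2 := by
        intro ω; simp only [hQdef, Finset.sum_insert hi]; ring
      simp only [hexp]
      rw [integral_add (intQ1 s) (intYpow i 2 (by norm_num)), ih, momY, hc2,
        Finset.card_insert_of_notMem hi]
      push_cast; ring
  have I2 : ∀ s : Finset (Fin n), ∫ ω, S s ω ^ 2 ∂μ = s.card * σ2 := by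
    intro s
    induction s using Finset.induction_on with
    | empty => simp [hSdef]
    | @insert i s hi ih =>
      have hexp : ∀ ω, S (insert i s) ω ^ 2
          = S s ω ^ 2 + (2 * (S s ω * Y i ω ^ 1) + Y i ω ^ 2) := by
        intro ω; simp only [hSdef, Finset.sum_insert hi]; ring
      have hcr : ∫ ω, S s ω * Y i ω ^ 1 ∂μ = (∫ ω, S s ω ∂μ) * c 1 := by
        simpa using int_mulYk s i hi (fun _ y => y) measurable_snd 1
      have hcri : Integrable (fun ω => S s ω * Y i ω ^ 1) μ := by
        simpa using int_mulYk_int s i hi (fun _ y => y) measurable_snd (intS1 s) 1 (by norm_num)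
      have h2 : Integrable (fun ω => 2 * (S s ω * Y i ω ^ 1)) μ := hcri.const_mul 2
      have h3 : Integrable (fun ω => 2 * (S s ω * Y i ω ^ 1) + Y i ω ^ 2) μ :=
        h2.add (intYpow i 2 (by norm_num))
      simp only [hexp]
      rw [integral_add (intS s 2 (by norm_num)) h3, integral_add h2 (intYpow i 2 (by norm_num)),
        integral_const_mul, hcr, hc1, momY, hc2, ih, Finset.card_insert_of_notMem hi]
      push_cast; ring
  have I4 : ∀ s : Finset (Fin n), ∫ ω, S s ω ^ 4 ∂μ
      = s.card * m4 + 3 * s.card * (s.card - 1) * σ2 ^ 2 := by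
    intro s
    induction s using Finset.induction_on with
    | empty => simp [hSdef]
    | @insert i s hi ih =>
      have hexp : ∀ ω, S (insert i s) ω ^ 4
          = S s ω ^ 4 + (4 * (S s ω ^ 3 * Y i ω ^ 1) + (6 * (S s ω ^ 2 * Y i ω ^ 2)
            + (4 * (S s ω * Y i ω ^ 3) + Y i ω ^ 4))) := by
        intro ω; simp only [hSdef, Finset.sum_insert hi]; ring
      have e31 : ∫ ω, S s ω ^ 3 * Y i ω ^ 1 ∂μ = (∫ ω, S s ω ^ 3 ∂μ) * c 1 := by
        simpa using int_mulYk s i hi (fun _ y => y ^ 3) (measurable_snd.pow_const 3) 1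
      have e22 : ∫ ω, S s ω ^ 2 * Y i ω ^ 2 ∂μ = (∫ ω, S s ω ^ 2 ∂μ) * c 2 := by
        simpa using int_mulYk s i hi (fun _ y => y ^ 2) (measurable_snd.pow_const 2) 2
      have e13 : ∫ ω, S s ω * Y i ω ^ 3 ∂μ = (∫ ω, S s ω ∂μ) * c 3 := by
        simpa using int_mulYk s i hi (fun _ y => y) measurable_snd 3
      have i31 : Integrable (fun ω => S s ω ^ 3 * Y i ω ^ 1) μ := by
        simpa using int_mulYk_int s i hi (fun _ y => y ^ 3) (measurable_snd.pow_const 3)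
          (intS s 3 (by norm_num)) 1 (by norm_num)
      have i22 : Integrable (fun ω => S s ω ^ 2 * Y i ω ^ 2) μ := by
        simpa using int_mulYk_int s i hi (fun _ y => y ^ 2) (measurable_snd.pow_const 2)
          (intS s 2 (by norm_num)) 2 (by norm_num)
      have i13 : Integrable (fun ω => S s ω * Y i ω ^ 3) μ := by
        simpa using int_mulYk_int s i hi (fun _ y => y) measurable_snd (intS1 s) 3 (by norm_num)
      have hT4 : Integrable (fun ω => 4 * (S s ω * Y i ω ^ 3) + Y i ω ^ 4) μ :=
        (i13.const_mul 4).add (intYpow i 4 (by norm_num))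
      have hT3 : Integrable (fun ω => 6 * (S s ω ^ 2 * Y i ω ^ 2)
          + (4 * (S s ω * Y i ω ^ 3) + Y i ω ^ 4)) μ := (i22.const_mul 6).add hT4
      have hT2 : Integrable (fun ω => 4 * (S s ω ^ 3 * Y i ω ^ 1) + (6 * (S s ω ^ 2 * Y i ω ^ 2)
          + (4 * (S s ω * Y i ω ^ 3) + Y i ω ^ 4))) μ := (i31.const_mul 4).add hT3
      simp only [hexp]
      rw [integral_add (intS s 4 le_rfl) hT2,
        integral_add (i31.const_mul 4) hT3,
        integral_add (i22.const_mul 6) hT4,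
        integral_add (i13.const_mul 4) (intYpow i 4 (by norm_num)),
        integral_const_mul, integral_const_mul, integral_const_mul,
        e31, e22, e13, hc1, hc2, momY, hc4, ih, I1 s, I2 s, Finset.card_insert_of_notMem hi]
      push_cast; ring
  have J12 : ∀ s : Finset (Fin n), ∫ ω, Q s ω * S s ω ^ 2 ∂μ
      = s.card * m4 + s.card * (s.card - 1) * σ2 ^ 2 := by
    intro s
    induction s using Finset.induction_on with
    | empty => simp [hQdef]
    | @insert i s hi ih =>
      have hexp : ∀ ω, Q (insert i s) ω * S (insert i s) ω ^ 2
          = Q s ω * S s ω ^ 2 + (2 * ((Q s ω * S s ω) * Y i ω ^ 1) + (Q s ω * Y i ω ^ 2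
            + (S s ω ^ 2 * Y i ω ^ 2 + (2 * (S s ω * Y i ω ^ 3) + Y i ω ^ 4)))) := by
        intro ω; simp only [hSdef, hQdef, Finset.sum_insert hi]; ring
      have eqs : ∫ ω, (Q s ω * S s ω) * Y i ω ^ 1 ∂μ = (∫ ω, Q s ω * S s ω ∂μ) * c 1 := by
        simpa using int_mulYk s i hi (fun q y => q * y) (measurable_fst.mul measurable_snd) 1
      have eq2 : ∫ ω, Q s ω * Y i ω ^ 2 ∂μ = (∫ ω, Q s ω ∂μ) * c 2 := by
        simpa using int_mulYk s i hi (fun q _ => q) measurable_fst 2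
      have es2 : ∫ ω, S s ω ^ 2 * Y i ω ^ 2 ∂μ = (∫ ω, S s ω ^ 2 ∂μ) * c 2 := by
        simpa using int_mulYk s i hi (fun _ y => y ^ 2) (measurable_snd.pow_const 2) 2
      have es3 : ∫ ω, S s ω * Y i ω ^ 3 ∂μ = (∫ ω, S s ω ∂μ) * c 3 := by
        simpa using int_mulYk s i hi (fun _ y => y) measurable_snd 3
      have iqs : Integrable (fun ω => (Q s ω * S s ω) * Y i ω ^ 1) μ := by
        simpa using int_mulYk_int s i hi (fun q y => q * y) (measurable_fst.mul measurable_snd)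
          (intQS s) 1 (by norm_num)
      have iq2 : Integrable (fun ω => Q s ω * Y i ω ^ 2) μ := by
        simpa using int_mulYk_int s i hi (fun q _ => q) measurable_fst (intQ1 s) 2 (by norm_num)
      have is2 : Integrable (fun ω => S s ω ^ 2 * Y i ω ^ 2) μ := by
        simpa using int_mulYk_int s i hi (fun _ y => y ^ 2) (measurable_snd.pow_const 2)
          (intS s 2 (by norm_num)) 2 (by norm_num)
      have is3 : Integrable (fun ω => S s ω * Y i ω ^ 3) μ := by
        simpa using int_mulYk_int s i hi (fun _ y => y) measurable_snd (intS1 s) 3 (by norm_num)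
      have hT5 : Integrable (fun ω => 2 * (S s ω * Y i ω ^ 3) + Y i ω ^ 4) μ :=
        (is3.const_mul 2).add (intYpow i 4 (by norm_num))
      have hT4 : Integrable (fun ω => S s ω ^ 2 * Y i ω ^ 2
          + (2 * (S s ω * Y i ω ^ 3) + Y i ω ^ 4)) μ := is2.add hT5
      have hT3 : Integrable (fun ω => Q s ω * Y i ω ^ 2 + (S s ω ^ 2 * Y i ω ^ 2
          + (2 * (S s ω * Y i ω ^ 3) + Y i ω ^ 4))) μ := iq2.add hT4
      have hT2 : Integrable (fun ω => 2 * ((Q s ω * S s ω) * Y i ω ^ 1) + (Q s ω * Y i ω ^ 2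
          + (S s ω ^ 2 * Y i ω ^ 2 + (2 * (S s ω * Y i ω ^ 3) + Y i ω ^ 4)))) μ :=
        (iqs.const_mul 2).add hT3
      simp only [hexp]
      rw [integral_add (intQS2 s) hT2,
        integral_add (iqs.const_mul 2) hT3,
        integral_add iq2 hT4,
        integral_add is2 hT5,
        integral_add (is3.const_mul 2) (intYpow i 4 (by norm_num)),
        integral_const_mul, integral_const_mul,
        eqs, eq2, es2, es3, hc1, hc2, momY, hc4, ih, I1 s, I2 s, J1 s,
        Finset.card_insert_of_notMem hi]
      push_cast; ring
  have J2 : ∀ s : Finset (Fin n), ∫ ω, Q s ω ^ 2 ∂μ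
      = s.card * m4 + s.card * (s.card - 1) * σ2 ^ 2 := by
    intro s
    induction s using Finset.induction_on with
    | empty => simp [hQdef]
    | @insert i s hi ih =>
      have hexp : ∀ ω, Q (insert i s) ω ^ 2
          = Q s ω ^ 2 + (2 * (Q s ω * Y i ω ^ 2) + Y i ω ^ 4) := by
        intro ω; simp only [hQdef, Finset.sum_insert hi]; ring
      have eq2 : ∫ ω, Q s ω * Y i ω ^ 2 ∂μ = (∫ ω, Q s ω ∂μ) * c 2 := by
        simpa using int_mulYk s i hi (fun q _ => q) measurable_fst 2
      have iq2 : Integrable (fun ω => Q s ω * Y i ω ^ 2) μ := by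
        simpa using int_mulYk_int s i hi (fun q _ => q) measurable_fst (intQ1 s) 2 (by norm_num)
      have hT3 : Integrable (fun ω => 2 * (Q s ω * Y i ω ^ 2) + Y i ω ^ 4) μ :=
        (iq2.const_mul 2).add (intYpow i 4 (by norm_num))
      simp only [hexp]
      rw [integral_add (intQ2 s) hT3,
        integral_add (iq2.const_mul 2) (intYpow i 4 (by norm_num)),
        integral_const_mul, eq2, hc2, momY, hc4, ih, J1 s,
        Finset.card_insert_of_notMem hi]
      push_cast; ring

  -- the un-normalized sample variance T = (n-1) S²
  set T : Ω → ℝ := fun ω => Q Finset.univ ω - S Finset.univ ω ^ 2 / n with hTdef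
  have hsum : ∀ ω, (∑ i, (X i ω - Xbar ω) ^ 2) = T ω := by
    intro ω
    have hXb : Xbar ω = S Finset.univ ω / n + m := by
      have h1 : (∑ i, X i ω) = (∑ i, Y i ω) + n * m := by
        simp only [hYdef, Finset.sum_sub_distrib, Finset.sum_const, Finset.card_univ,
          Fintype.card_fin, nsmul_eq_mul]
        ring
      rw [hXbar ω, h1, hSapp]
      field_simp
    have hXi : ∀ i, X i ω - Xbar ω = Y i ω - S Finset.univ ω / n := by
      intro i; rw [hXb]; simp only [hYdef]; ring
    calc (∑ i, (X i ω - Xbar ω) ^ 2)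
        = ∑ i, (Y i ω ^ 2 - 2 * (S Finset.univ ω / n) * Y i ω
            + (S Finset.univ ω / n) ^ 2) := by
          refine Finset.sum_congr rfl fun i _ => ?_
          rw [hXi i]; ring
      _ = Q Finset.univ ω - 2 * (S Finset.univ ω / n) * S Finset.univ ω
            + n * (S Finset.univ ω / n) ^ 2 := by
          rw [Finset.sum_add_distrib, Finset.sum_sub_distrib, ← Finset.mul_sum,
            Finset.sum_const, Finset.card_univ, Fintype.card_fin, nsmul_eq_mul,
            hQapp, hSapp]
      _ = T ω := by rw [hTdef]; field_simp; ring
  have hS2T : ∀ ω, S2 ω = T ω / ((n:ℝ) - 1) := by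
    intro ω; rw [hS2 ω, hsum ω]
  -- L² membership of T and S2
  have memT2 : MemLp T 2 μ := by
    have h1 : MemLp (fun ω => ((n:ℝ))⁻¹ * S Finset.univ ω ^ 2) 2 μ :=
      (memS2 Finset.univ).const_mul _
    have h2 := (memQ Finset.univ).sub h1
    refine MemLp.ae_eq (Filter.Eventually.of_forall fun ω => ?_) h2
    show Q Finset.univ ω - ((n:ℝ))⁻¹ * S Finset.univ ω ^ 2 = T ω
    rw [hTdef]; ring
  have memS2L2 : MemLp S2 2 μ := by
    have h1 : MemLp (fun ω => (((n:ℝ) - 1))⁻¹ * T ω) 2 μ := memT2.const_mul _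
    refine MemLp.ae_eq (Filter.Eventually.of_forall fun ω => ?_) h1
    show (((n:ℝ) - 1))⁻¹ * T ω = S2 ω
    rw [hS2T ω]; ring
  -- expectation of T and S2
  have intT : Integrable T μ := memT2.integrable one_le_two
  have hETval : ∫ ω, T ω ∂μ = ((n:ℝ) - 1) * σ2 := by
    have h1 : ∫ ω, T ω ∂μ
        = (∫ ω, Q Finset.univ ω ∂μ) - (∫ ω, S Finset.univ ω ^ 2 / (n:ℝ) ∂μ) := by
      exact integral_sub (intQ1 _) ((intS Finset.univ 2 (by norm_num)).div_const _)
    rw [h1, integral_div, J1, I2, Finset.card_univ, Fintype.card_fin]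
    field_simp
  have hES2 : ∫ ω, S2 ω ∂μ = σ2 := by
    calc ∫ ω, S2 ω ∂μ = ∫ ω, T ω / ((n:ℝ) - 1) ∂μ := by simp only [hS2T]
      _ = (∫ ω, T ω ∂μ) / ((n:ℝ) - 1) := integral_div _ _
      _ = σ2 := by rw [hETval]; field_simp
  -- second moment of T
  have hET2 : ∫ ω, T ω ^ 2 ∂μ
      = (n:ℝ) * m4 + (n:ℝ) * ((n:ℝ) - 1) * σ2 ^ 2
        - (2 / (n:ℝ)) * ((n:ℝ) * m4 + (n:ℝ) * ((n:ℝ) - 1) * σ2 ^ 2)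
        + (1 / (n:ℝ) ^ 2) * ((n:ℝ) * m4 + 3 * (n:ℝ) * ((n:ℝ) - 1) * σ2 ^ 2) := by
    have hexp : ∀ ω, T ω ^ 2
        = Q Finset.univ ω ^ 2 + ((-(2 / (n:ℝ))) * (Q Finset.univ ω * S Finset.univ ω ^ 2)
          + (1 / (n:ℝ) ^ 2) * S Finset.univ ω ^ 4) := by
      intro ω; rw [hTdef]; field_simp; ring
    have hT3 : Integrable (fun ω => (-(2 / (n:ℝ))) * (Q Finset.univ ω * S Finset.univ ω ^ 2)
        + (1 / (n:ℝ) ^ 2) * S Finset.univ ω ^ 4) μ :=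
      ((intQS2 Finset.univ).const_mul _).add ((intS Finset.univ 4 le_rfl).const_mul _)
    simp only [hexp]
    rw [integral_add (intQ2 Finset.univ) hT3,
      integral_add ((intQS2 Finset.univ).const_mul _) ((intS Finset.univ 4 le_rfl).const_mul _),
      integral_const_mul, integral_const_mul,
      J2, J12, I4, Finset.card_univ, Fintype.card_fin]
    ring
  -- the variance of S2
  have hVar : variance S2 μ
      = m4 / n - ((n:ℝ) - 3) * σ2 ^ 2 / ((n:ℝ) * ((n:ℝ) - 1)) := by
    rw [variance_eq_sub memS2L2]
    have hp : μ[S2 ^ 2] = ∫ ω, S2 ω ^ 2 ∂μ := rfl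
    have hq : μ[S2] = σ2 := hES2
    rw [hp, hq]
    have h2 : ∫ ω, S2 ω ^ 2 ∂μ = (∫ ω, T ω ^ 2 ∂μ) / ((n:ℝ) - 1) ^ 2 := by
      have he : ∀ ω, S2 ω ^ 2 = T ω ^ 2 / ((n:ℝ) - 1) ^ 2 := by
        intro ω; rw [hS2T ω, div_pow]
      simp only [he]
      exact integral_div _ _
    rw [h2, hET2]
    field_simp
    ring
  -- Chebyshev
  have hc0 : (0:ℝ) < ε * σ2 := by positivity
  have hcheb := meas_ge_le_variance_div_sq (μ := μ) memS2L2 hc0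
  have hcheb' : μ {ω | ε * σ2 ≤ |S2 ω - σ2|}
      ≤ ENNReal.ofReal (variance S2 μ / (ε * σ2) ^ 2) := by
    have hq : μ[S2] = σ2 := hES2
    rw [hq] at hcheb
    exact hcheb
  have requal : variance S2 μ / (ε * σ2) ^ 2
      = (1 / ε ^ 2) * (κ / n - ((n : ℝ) - 3) / ((n : ℝ) * ((n : ℝ) - 1))) := by
    rw [hVar, hκ]
    field_simp
  -- measurability of the bad set
  have hS2meas : Measurable S2 := by
    have hfun : S2 = fun ω => (∑ i, (X i ω - (∑ j, X j ω) / n) ^ 2) / ((n:ℝ) - 1) := by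
      funext ω
      rw [hS2 ω]
      congr 1
      refine Finset.sum_congr rfl fun i _ => ?_
      rw [hXbar ω]
    rw [hfun]
    exact (Finset.measurable_sum Finset.univ fun i _ =>
      (((hmeas i).sub ((Finset.measurable_sum Finset.univ fun j _ => hmeas j).div_const _)).pow_const 2)).div_const _
  have hbadmeas : MeasurableSet {ω | ε * σ2 ≤ |S2 ω - σ2|} :=
    measurableSet_le measurable_const ((hS2meas.sub measurable_const).abs)
  -- inclusion of the complement of the bad set in the target event
  have h1ε : (0:ℝ) < 1 - ε := by linarith
  have hsub : {ω | ε * σ2 ≤ |S2 ω - σ2|}ᶜ ⊆ {ω | 1 / Real.sqrt (1 + ε) ≤ Real.sqrt σ2 / σs ω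
      ∧ Real.sqrt σ2 / σs ω ≤ 1 / Real.sqrt (1 - ε)} := by
    intro ω hω
    simp only [Set.mem_compl_iff, Set.mem_setOf_eq, not_le] at hω
    have habs := abs_lt.mp hω
    have hlow : σ2 * (1 - ε) ≤ S2 ω := by nlinarith [habs.1]
    have hup : S2 ω ≤ σ2 * (1 + ε) := by nlinarith [habs.2]
    have hS2pos : 0 < S2 ω := lt_of_lt_of_le (by nlinarith) hlow
    have hsq : 0 < Real.sqrt (S2 ω) := Real.sqrt_pos.mpr hS2pos
    constructor
    · show 1 / Real.sqrt (1 + ε) ≤ Real.sqrt σ2 / σs ω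
      rw [hσs ω, div_le_div_iff₀ (Real.sqrt_pos.mpr (by linarith)) hsq, one_mul,
        ← Real.sqrt_mul hσ2pos.le]
      exact Real.sqrt_le_sqrt hup
    · show Real.sqrt σ2 / σs ω ≤ 1 / Real.sqrt (1 - ε)
      rw [hσs ω, div_le_div_iff₀ hsq (Real.sqrt_pos.mpr h1ε), one_mul,
        ← Real.sqrt_mul hσ2pos.le]
      exact Real.sqrt_le_sqrt hlow
  -- wrap up
  set rr : ℝ := (1 / ε ^ 2) * (κ / n - ((n : ℝ) - 3) / ((n : ℝ) * ((n : ℝ) - 1))) with hrr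
  have hbadle : μ {ω | ε * σ2 ≤ |S2 ω - σ2|} ≤ ENNReal.ofReal rr := by
    rw [← requal]
    exact hcheb'
  rcases le_or_gt (1 - rr) 0 with h0 | h0
  · rw [ENNReal.ofReal_eq_zero.mpr h0]
    exact zero_le
  · calc ENNReal.ofReal (1 - rr) = 1 - ENNReal.ofReal rr := by
          rw [ENNReal.ofReal_sub 1 (by rw [← requal]; exact div_nonneg (variance_nonneg _ _) (by positivity)), ENNReal.ofReal_one]
      _ ≤ 1 - μ {ω | ε * σ2 ≤ |S2 ω - σ2|} := tsub_le_tsub_left hbadle 1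
      _ = μ ({ω | ε * σ2 ≤ |S2 ω - σ2|}ᶜ) := (prob_compl_eq_one_sub hbadmeas).symm
      _ ≤ μ {ω | 1 / Real.sqrt (1 + ε) ≤ Real.sqrt σ2 / σs ω
            ∧ Real.sqrt σ2 / σs ω ≤ 1 / Real.sqrt (1 - ε)} := measure_mono hsub
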